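/- Let H be strictly 2-balanced with p = n^{−(v_H−2)/(e_H−1)}, n > 1. Let J be a subgraph of H with e_J ≤ e_H − 2 and V_J = V_H, and let A = {u,v} where uv is an edge of H not contained in J. Then (A,J) is strictly dense: S_{A,J[B]} > 1 for every B with A ⊊ B ⊆ V_J. -/

import Mathlib

def Strictly2Balanced {V : Type*} [Fintype V] (H : SimpleGraph V) : Prop :=
  3 ≤ Fintype.card V ∧ 3 ≤ H.edgeSet.ncard ∧
  ∀ K : H.Subgraph, K ≠ ⊤ → 3 ≤ K.verts.ncard →
    ((H.edgeSet.ncard : ℝ) - 1) / ((Fintype.card V : ℝ) - 2) >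
      ((K.edgeSet.ncard : ℝ) - 1) / ((K.verts.ncard : ℝ) - 2)

/-- `S_{A,Γ[B]}`, the extension scaling within the induced subgraph on `B`. -/
noncomputable def scalingInd {V : Type*} [Fintype V] (n p : ℝ)
    (Γ : SimpleGraph V) (A B : Set V) : ℝ :=
  p ^ ((Γ.induce B).edgeSet.ncard - (Γ.induce A).edgeSet.ncard) *
    n ^ (B.ncard - A.ncard)

theorem stmt_8 {V : Type*} [Fintype V] (H : SimpleGraph V)
    (h2b : Strictly2Balanced H) (n : ℝ) (hn : 1 < n) (p : ℝ)
    (hp : p = n ^ (-(((Fintype.card V : ℝ) - 2) / ((H.edgeSet.ncard : ℝ) - 1))))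
    (J : SimpleGraph V) (hJH : J ≤ H)
    (heJ : J.edgeSet.ncard + 2 ≤ H.edgeSet.ncard)
    (u v : V) (huv : H.Adj u v) (huvJ : ¬ J.Adj u v) :
    ∀ B : Set V, ({u, v} : Set V) ⊂ B → 1 < scalingInd n p J {u, v} B := by
  intro B hB
  have npos : (0:ℝ) < n := lt_trans one_pos hn
  have hne : u ≠ v := huv.ne
  have huB : u ∈ B := hB.1 (by simp)
  have hvB : v ∈ B := hB.1 (by simp)
  have hA2 : ({u, v} : Set V).ncard = 2 := Set.ncard_pair hne
  have hb3 : 3 ≤ B.ncard := by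
    have h := Set.ncard_lt_ncard hB B.toFinite
    omega
  -- A has no induced edges
  have hA0 : (J.induce ({u, v} : Set V)).edgeSet.ncard = 0 := by
    rw [Set.ncard_eq_zero (Set.toFinite _)]
    ext w
    simp only [Set.mem_empty_iff_false, iff_false]
    induction w using Sym2.ind with
    | _ a b =>
      intro hw
      rw [SimpleGraph.mem_edgeSet] at hw
      have hadj : J.Adj (a : V) (b : V) := hw
      have ha : (a : V) = u ∨ (a : V) = v := a.2
      have hb : (b : V) = u ∨ (b : V) = v := b.2
      rcases ha with h1 | h1 <;> rcases hb with h2 | h2 <;>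
        rw [h1, h2] at hadj
      · exact J.irrefl hadj
      · exact huvJ hadj
      · exact huvJ hadj.symm
      · exact J.irrefl hadj
  -- the set of J-edges inside B, as a subset of Sym2 V
  set E : Set (Sym2 V) := {w | ∃ x y : V, w = s(x, y) ∧ J.Adj x y ∧ x ∈ B ∧ y ∈ B} with hE
  have hEim : Sym2.map (Subtype.val : B → V) '' (J.induce B).edgeSet = E := by
    ext w
    constructor
    · rintro ⟨w', hw', rfl⟩
      revert hw'
      induction w' using Sym2.ind with
      | _ a b =>
        intro hw'
        rw [SimpleGraph.mem_edgeSet] at hw'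
        exact ⟨a, b, rfl, hw', a.2, b.2⟩
    · rintro ⟨x, y, rfl, hxy, hxB, hyB⟩
      exact ⟨s(⟨x, hxB⟩, ⟨y, hyB⟩), hxy, rfl⟩
  have hEcard : (J.induce B).edgeSet.ncard = E.ncard := by
    rw [← hEim, Set.ncard_image_of_injective _ (Sym2.map.injective Subtype.val_injective)]
  have hEsub : E ⊆ J.edgeSet := by
    rintro w ⟨x, y, rfl, hxy, -, -⟩
    exact hxy
  have hEJ : E.ncard ≤ J.edgeSet.ncard := Set.ncard_le_ncard hEsub (Set.toFinite _)
  have huvE : s(u, v) ∉ E := by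
    rintro ⟨x, y, hxy, hadj, -, -⟩
    rw [Sym2.eq_iff] at hxy
    rcases hxy with ⟨rfl, rfl⟩ | ⟨rfl, rfl⟩
    · exact huvJ hadj
    · exact huvJ hadj.symm
  -- the subgraph K of H: J restricted to B plus the edge uv
  let K : H.Subgraph :=
    { verts := B
      Adj := fun x y => (J.Adj x y ∨ s(x, y) = s(u, v)) ∧ x ∈ B ∧ y ∈ B
      adj_sub := by
        rintro x y ⟨h | h, -, -⟩
        · exact hJH h
        · rw [Sym2.eq_iff] at h
          rcases h with ⟨rfl, rfl⟩ | ⟨rfl, rfl⟩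
          · exact huv
          · exact huv.symm
      edge_vert := fun h => h.2.1
      symm := ⟨by
        rintro x y ⟨h, hx, hy⟩
        refine ⟨?_, hy, hx⟩
        rcases h with h | h
        · exact Or.inl h.symm
        · exact Or.inr ((Sym2.eq_swap).trans h)⟩ }
  have hKE : K.edgeSet = insert s(u, v) E := by
    ext w
    induction w using Sym2.ind with
    | _ x y =>
      rw [SimpleGraph.Subgraph.mem_edgeSet, Set.mem_insert_iff]
      constructor
      · rintro ⟨h | h, hx, hy⟩
        · exact Or.inr ⟨x, y, rfl, h, hx, hy⟩
        · exact Or.inl h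
      · rintro (h | ⟨a, b, hab, hadj, haB, hbB⟩)
        · rw [Sym2.eq_iff] at h
          rcases h with ⟨rfl, rfl⟩ | ⟨rfl, rfl⟩
          · exact ⟨Or.inr rfl, huB, hvB⟩
          · exact ⟨Or.inr Sym2.eq_swap, hvB, huB⟩
        · rw [Sym2.eq_iff] at hab
          rcases hab with ⟨rfl, rfl⟩ | ⟨rfl, rfl⟩
          · exact ⟨Or.inl hadj, haB, hbB⟩
          · exact ⟨Or.inl hadj.symm, hbB, haB⟩
  have hKcard : K.edgeSet.ncard = E.ncard + 1 := by
    rw [hKE, Set.ncard_insert_of_notMem huvE (Set.toFinite _)]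
  have hKtop : K ≠ ⊤ := by
    intro h
    have : K.edgeSet = H.edgeSet := by rw [h, SimpleGraph.Subgraph.edgeSet_top]
    have h2 : K.edgeSet.ncard = H.edgeSet.ncard := by rw [this]
    omega
  have hKverts : K.verts = B := rfl
  have hkey := h2b.2.2 K hKtop (by rw [hKverts]; omega)
  rw [hKverts, hKcard] at hkey
  -- numeric setup
  have hv3 : 3 ≤ Fintype.card V := h2b.1
  have he3 : 3 ≤ H.edgeSet.ncard := h2b.2.1
  have hvpos : (0:ℝ) < (Fintype.card V : ℝ) - 2 := by
    have : (3:ℝ) ≤ (Fintype.card V : ℝ) := by exact_mod_cast hv3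
    linarith
  have hepos : (0:ℝ) < (H.edgeSet.ncard : ℝ) - 1 := by
    have : (3:ℝ) ≤ (H.edgeSet.ncard : ℝ) := by exact_mod_cast he3
    linarith
  have hbpos : (0:ℝ) < (B.ncard : ℝ) - 2 := by
    have : (3:ℝ) ≤ (B.ncard : ℝ) := by exact_mod_cast hb3
    linarith
  have hkey2 : (E.ncard : ℝ) * ((Fintype.card V : ℝ) - 2) <
      ((B.ncard : ℝ) - 2) * ((H.edgeSet.ncard : ℝ) - 1) := by
    have h := (div_lt_div_iff₀ hbpos hvpos).mp (by push_cast at hkey ⊢; linarith)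
    linarith
  -- finish
  rw [scalingInd, hA0, hA2, Nat.sub_zero, hEcard]
  have hpm : p ^ E.ncard =
      n ^ ((-(((Fintype.card V : ℝ) - 2) / ((H.edgeSet.ncard : ℝ) - 1))) * E.ncard) := by
    rw [hp, ← Real.rpow_natCast (n ^ _) E.ncard, ← Real.rpow_mul (le_of_lt npos)]
  have hnb : n ^ (B.ncard - 2) = n ^ ((B.ncard : ℝ) - 2) := by
    rw [← Real.rpow_natCast n (B.ncard - 2), Nat.cast_sub (by omega)]
    norm_num
  rw [hpm, hnb, ← Real.rpow_add npos]
  rw [Real.one_lt_rpow_iff_of_pos npos]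
  have hfrac : (E.ncard : ℝ) * ((Fintype.card V : ℝ) - 2) / ((H.edgeSet.ncard : ℝ) - 1) <
      (B.ncard : ℝ) - 2 := by
    rw [div_lt_iff₀ hepos]
    linarith
  have hring : (-(((Fintype.card V : ℝ) - 2) / ((H.edgeSet.ncard : ℝ) - 1))) * E.ncard
      + ((B.ncard : ℝ) - 2)
      = ((B.ncard : ℝ) - 2) - (E.ncard : ℝ) * ((Fintype.card V : ℝ) - 2) /
        ((H.edgeSet.ncard : ℝ) - 1) := by ring
  refine Or.inl ⟨hn, ?_⟩
  rw [hring]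
  exact sub_pos.mpr hfrac
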